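/- The exponential kernel k(x,x') = exp(κ⟨x,x'⟩) for κ > 0 is a universal kernel on any compact subset of ℝ^d. -/

import Mathlib

open scoped RealInnerProductSpace

/-- A kernel `k` on a compact space `Ω` is universal if its RKHS (equivalently, the span of
its continuous sections `k x ·`) is dense in `C(Ω, ℝ)` for the supremum norm. -/
def Universal {Ω : Type*} [TopologicalSpace Ω] [CompactSpace Ω] (k : Ω → Ω → ℝ) : Prop :=
  Dense ((Submodule.span ℝ {f : C(Ω, ℝ) | ∃ x : Ω, ∀ y, f y = k x y} :
    Submodule ℝ C(Ω, ℝ)) : Set C(Ω, ℝ))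

/-- A subspace on which every vanishing continuous functional is zero is dense. -/
lemma dense_of_dual_eq_zero {E : Type*} [NormedAddCommGroup E] [NormedSpace ℝ E]
    (p : Submodule ℝ E) (h : ∀ φ : E →L[ℝ] ℝ, (∀ x ∈ p, φ x = 0) → φ = 0) :
    Dense (p : Set E) := by
  by_contra hd
  obtain ⟨x, hx⟩ : ∃ x, x ∉ closure (p : Set E) := by
    by_contra h'
    push_neg at h'
    exact hd fun x => h' x
  obtain ⟨f, u, hfu, hux⟩ :=
    geometric_hahn_banach_closed_point (p.convex.closure) isClosed_closure hx
  have hf0 : ∀ v ∈ p, f v = 0 := by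
    intro v hv
    by_contra hne
    have h1 : f (((u + 1) / f v) • v) < u :=
      hfu _ (subset_closure (p.smul_mem _ hv))
    rw [map_smul, smul_eq_mul, div_mul_cancel₀ _ hne] at h1
    linarith
  have hf := h f hf0
  have h0 : f 0 < u := hfu 0 (subset_closure p.zero_mem)
  rw [hf] at hux
  simp only [ContinuousLinearMap.zero_apply, map_zero] at hux h0
  linarith

set_option maxHeartbeats 1000000

/-- The `i`-th coordinate, as a continuous function on `K`. -/
noncomputable def coordC {d : ℕ} (K : Set (EuclideanSpace ℝ (Fin d))) (i : Fin d) : C(K, ℝ) :=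
  ⟨fun x => (x : EuclideanSpace ℝ (Fin d)) i,
    ((EuclideanSpace.proj i : EuclideanSpace ℝ (Fin d) →L[ℝ] ℝ).continuous).comp
      continuous_subtype_val⟩

@[simp] lemma coordC_apply {d : ℕ} (K : Set (EuclideanSpace ℝ (Fin d))) (i : Fin d) (x : K) :
    coordC K i x = (x : EuclideanSpace ℝ (Fin d)) i := rfl

/-- A monomial in the coordinates. -/
noncomputable def monC {d : ℕ} (K : Set (EuclideanSpace ℝ (Fin d))) {n : ℕ} (f : Fin n → Fin d) : C(K, ℝ) :=
  ∏ j, coordC K (f j)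

lemma monC_apply {d : ℕ} (K : Set (EuclideanSpace ℝ (Fin d))) {n : ℕ} (f : Fin n → Fin d)
    (x : K) : monC K f x = ∏ j, (x : EuclideanSpace ℝ (Fin d)) (f j) := by
  simp [monC, ContinuousMap.prod_apply]

/-- The exponential kernel `k(x,x') = exp(κ ⟨x,x'⟩)`, `κ > 0`, is universal on any compact
subset of `ℝ^d`. -/
theorem exponential_kernel_universal
    (d : ℕ) (K : Set (EuclideanSpace ℝ (Fin d))) (hK : IsCompact K)
    (κ : ℝ) (hκ : 0 < κ) :
    @Universal K _ (isCompact_iff_compactSpace.mp hK)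
      (fun x y : K => Real.exp (κ * ⟪(x : EuclideanSpace ℝ (Fin d)), (y : EuclideanSpace ℝ (Fin d))⟫)) := by
  haveI : CompactSpace K := isCompact_iff_compactSpace.mp hK
  unfold Universal
  cases isEmpty_or_nonempty K with
  | inl hemp =>
    intro g
    have hg : g = 0 := by ext y; exact isEmptyElim y
    rw [hg]
    exact subset_closure (Submodule.zero_mem _)
  | inr hne =>
  apply dense_of_dual_eq_zero
  intro φ hφ
  -- bound on coordinates
  set M : ℝ := 1 + ∑ i, ‖coordC K i‖ with hMdef
  have hM1 : (1 : ℝ) ≤ M := by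
    have : (0 : ℝ) ≤ ∑ i, ‖coordC K i‖ := Finset.sum_nonneg fun i _ => norm_nonneg _
    simp only [hMdef]; linarith
  have hM0 : (0 : ℝ) ≤ M := le_trans zero_le_one hM1
  have hMc : ∀ i : Fin d, ‖coordC K i‖ ≤ M := by
    intro i
    have := Finset.single_le_sum (f := fun i => ‖coordC K i‖)
      (fun j _ => norm_nonneg _) (Finset.mem_univ i)
    simp only [hMdef]; linarith
  have hPnorm : ∀ {n : ℕ} (f : Fin n → Fin d), ‖monC K f‖ ≤ M ^ n := by
    intro n f
    calc ‖monC K f‖ ≤ ∏ j : Fin n, ‖coordC K (f j)‖ := Finset.norm_prod_le _ _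
      _ ≤ ∏ _j : Fin n, M := Finset.prod_le_prod (fun j _ => norm_nonneg _)
          (fun j _ => hMc (f j))
      _ = M ^ n := by simp
  have hPx : ∀ {n : ℕ} (f : Fin n → Fin d) (x : K), |monC K f x| ≤ M ^ n := by
    intro n f x
    calc |monC K f x| = ‖monC K f x‖ := rfl
      _ ≤ ‖monC K f‖ := ContinuousMap.norm_coe_le_norm _ _
      _ ≤ M ^ n := hPnorm f
  -- the inner product expansion
  have hinner : ∀ x y : K,
      ⟪(x : EuclideanSpace ℝ (Fin d)), (y : EuclideanSpace ℝ (Fin d))⟫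
        = ∑ i, coordC K i x * coordC K i y := by
    intro x y
    simp [PiLp.inner_apply, RCLike.inner_apply, mul_comm]
  -- pointwise power expansion
  have hpow : ∀ (n : ℕ) (x y : K),
      (κ * ⟪(x : EuclideanSpace ℝ (Fin d)), (y : EuclideanSpace ℝ (Fin d))⟫) ^ n / n.factorial
        = (κ ^ n / n.factorial) * ∑ f : Fin n → Fin d, monC K f x * monC K f y := by
    intro n x y
    rw [mul_pow, hinner]
    have h1 : (∑ i, coordC K i x * coordC K i y) ^ n
        = ∑ f : Fin n → Fin d, monC K f x * monC K f y := by
      have h2 : (∑ i, coordC K i x * coordC K i y) ^ n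
          = ∏ _j : Fin n, (∑ i, coordC K i x * coordC K i y) := by simp
      rw [h2, Finset.prod_univ_sum, Fintype.piFinset_univ]
      refine Finset.sum_congr rfl fun f _ => ?_
      rw [monC_apply, monC_apply, ← Finset.prod_mul_distrib]
      simp
    rw [h1]
    ring
  -- the section functions
  obtain ⟨sec, hsecapp⟩ : ∃ sec : K → C(K, ℝ), ∀ x y, sec x y
      = Real.exp (κ * ⟪(x : EuclideanSpace ℝ (Fin d)), (y : EuclideanSpace ℝ (Fin d))⟫) :=
    ⟨fun x =>
      ⟨fun y => Real.exp (κ * ⟪(x : EuclideanSpace ℝ (Fin d)), (y : EuclideanSpace ℝ (Fin d))⟫),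
        Real.continuous_exp.comp ((continuous_const.mul
          ((Continuous.inner continuous_const continuous_subtype_val))))⟩, fun x y => rfl⟩
  have hφsec : ∀ x : K, φ (sec x) = 0 := by
    intro x
    exact hφ _ (Submodule.subset_span ⟨x, fun y => hsecapp x y⟩)
  -- the series terms, as continuous functions of y with x fixed
  obtain ⟨Q, hQdef⟩ : ∃ Q : K → ℕ → C(K, ℝ), ∀ x n, Q x n
      = (κ ^ n / n.factorial) • ∑ f : Fin n → Fin d, (monC K f x) • monC K f :=
    ⟨fun x n => (κ ^ n / n.factorial) • ∑ f : Fin n → Fin d, (monC K f x) • monC K f,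
      fun x n => rfl⟩
  have Q_apply : ∀ (x : K) (n : ℕ) (y : K),
      Q x n y = (κ * ⟪(x : EuclideanSpace ℝ (Fin d)), (y : EuclideanSpace ℝ (Fin d))⟫) ^ n
        / n.factorial := by
    intro x n y
    rw [hpow, hQdef]
    simp [ContinuousMap.sum_apply, Finset.mul_sum, mul_assoc]
  set r : ℝ := κ * (M * (M * d)) with hrdef
  have hcard : ∀ n : ℕ, (Finset.univ : Finset (Fin n → Fin d)).card = d ^ n := by
    intro n
    rw [Finset.card_univ, Fintype.card_fun]
    simp
  have hrpow : ∀ n : ℕ, r ^ n = κ ^ n * (M ^ n * (M ^ n * (d : ℝ) ^ n)) := by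
    intro n
    rw [hrdef, mul_pow, mul_pow, mul_pow]
  have hQnorm : ∀ (x : K) (n : ℕ), ‖Q x n‖ ≤ r ^ n / n.factorial := by
    intro x n
    have hc : (0:ℝ) ≤ κ ^ n / n.factorial := by positivity
    have h1 : ‖Q x n‖ ≤ (κ ^ n / n.factorial) * ∑ f : Fin n → Fin d, |monC K f x| * ‖monC K f‖ := by
      calc ‖Q x n‖
          = ‖(κ ^ n / n.factorial : ℝ)‖ * ‖∑ f : Fin n → Fin d, (monC K f x) • monC K f‖ := by
            rw [hQdef]
            exact norm_smul (κ ^ n / (n.factorial : ℝ))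
              (∑ f : Fin n → Fin d, (monC K f x) • monC K f)
        _ = (κ ^ n / n.factorial) * ‖∑ f : Fin n → Fin d, (monC K f x) • monC K f‖ := by
            rw [Real.norm_eq_abs, abs_of_nonneg hc]
        _ ≤ (κ ^ n / n.factorial) * ∑ f : Fin n → Fin d, |monC K f x| * ‖monC K f‖ := by
            refine mul_le_mul_of_nonneg_left ?_ hc
            calc ‖∑ f : Fin n → Fin d, (monC K f x) • monC K f‖
                ≤ ∑ f : Fin n → Fin d, ‖(monC K f x) • monC K f‖ := norm_sum_le _ _
              _ = ∑ f : Fin n → Fin d, |monC K f x| * ‖monC K f‖ :=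
                  Finset.sum_congr rfl fun f _ =>
                    (norm_smul (monC K f x) (monC K f)).trans
                      (by rw [Real.norm_eq_abs])
    have h2 : ∑ f : Fin n → Fin d, |monC K f x| * ‖monC K f‖ ≤ (d : ℝ) ^ n * (M ^ n * M ^ n) := by
      calc ∑ f : Fin n → Fin d, |monC K f x| * ‖monC K f‖
          ≤ ∑ _f : Fin n → Fin d, M ^ n * M ^ n := Finset.sum_le_sum fun f _ =>
            mul_le_mul (hPx f x) (hPnorm f) (norm_nonneg _) (pow_nonneg hM0 n)
        _ = (d : ℝ) ^ n * (M ^ n * M ^ n) := by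
            rw [Finset.sum_const, hcard n]; simp [nsmul_eq_mul]
    calc ‖Q x n‖ ≤ (κ ^ n / n.factorial) * ((d : ℝ) ^ n * (M ^ n * M ^ n)) :=
          h1.trans (mul_le_mul_of_nonneg_left h2 hc)
      _ = r ^ n / n.factorial := by rw [hrpow]; ring
  have hrsum : Summable (fun n : ℕ => r ^ n / n.factorial) :=
    Real.summable_pow_div_factorial r
  -- Q x sums to sec x in C(K, ℝ)
  have hQsum : ∀ x : K, HasSum (Q x) (sec x) := by
    intro x
    have hsummable : Summable (Q x) :=
      Summable.of_norm_bounded hrsum (hQnorm x)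
    have h1 := hsummable.hasSum
    have h2 : ∑' n, Q x n = sec x := by
      ext y
      have h3 : HasSum (fun n => Q x n y) ((∑' n, Q x n) y) :=
        (ContinuousMap.evalCLM ℝ y).hasSum h1
      have h4 : HasSum (fun n => Q x n y) (sec x y) := by
        have h5 := NormedSpace.expSeries_div_hasSum_exp
          (κ * ⟪(x : EuclideanSpace ℝ (Fin d)), (y : EuclideanSpace ℝ (Fin d))⟫)
        rw [← Real.exp_eq_exp_ℝ] at h5
        have h6 : (fun n => Q x n y)
            = fun n => (κ * ⟪(x : EuclideanSpace ℝ (Fin d)),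
                (y : EuclideanSpace ℝ (Fin d))⟫) ^ n / n.factorial := by
          funext n; exact Q_apply x n y
        rw [h6, hsecapp x y]
        exact h5
      exact h3.unique h4
    rwa [h2] at h1
  -- coefficient functions
  obtain ⟨F, hFdef⟩ : ∃ F : ℕ → C(K, ℝ), ∀ n, F n
      = (κ ^ n / n.factorial) • ∑ f : Fin n → Fin d, (φ (monC K f)) • monC K f :=
    ⟨fun n => (κ ^ n / n.factorial) • ∑ f : Fin n → Fin d, (φ (monC K f)) • monC K f,
      fun n => rfl⟩
  have hFx : ∀ (n : ℕ) (x : K), F n x = φ (Q x n) := by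
    intro n x
    rw [hQdef, hFdef]
    simp only [map_smul, map_sum, ContinuousMap.smul_apply, ContinuousMap.sum_apply,
      smul_eq_mul]
    congr 1
    exact Finset.sum_congr rfl fun f _ => mul_comm _ _
  have hFzero : ∀ x : K, HasSum (fun n => F n x) 0 := by
    intro x
    have h1 := φ.hasSum (hQsum x)
    rw [hφsec x] at h1
    have h2 : (fun n => F n x) = fun n => φ (Q x n) := funext fun n => hFx n x
    rw [h2]
    exact h1
  have hFnorm : ∀ n : ℕ, ‖F n‖ ≤ ‖φ‖ * (r ^ n / n.factorial) := by
    intro n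
    have hc : (0:ℝ) ≤ κ ^ n / n.factorial := by positivity
    have h1 : ‖F n‖ ≤ (κ ^ n / n.factorial) * ∑ f : Fin n → Fin d, |φ (monC K f)| * ‖monC K f‖ := by
      calc ‖F n‖
          = ‖(κ ^ n / n.factorial : ℝ)‖ * ‖∑ f : Fin n → Fin d, (φ (monC K f)) • monC K f‖ := by
            rw [hFdef]
            exact norm_smul (κ ^ n / (n.factorial : ℝ))
              (∑ f : Fin n → Fin d, (φ (monC K f)) • monC K f)
        _ = (κ ^ n / n.factorial) * ‖∑ f : Fin n → Fin d, (φ (monC K f)) • monC K f‖ := by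
            rw [Real.norm_eq_abs, abs_of_nonneg hc]
        _ ≤ (κ ^ n / n.factorial) * ∑ f : Fin n → Fin d, |φ (monC K f)| * ‖monC K f‖ := by
            refine mul_le_mul_of_nonneg_left ?_ hc
            calc ‖∑ f : Fin n → Fin d, (φ (monC K f)) • monC K f‖
                ≤ ∑ f : Fin n → Fin d, ‖(φ (monC K f)) • monC K f‖ := norm_sum_le _ _
              _ = ∑ f : Fin n → Fin d, |φ (monC K f)| * ‖monC K f‖ :=
                  Finset.sum_congr rfl fun f _ =>
                    (norm_smul (φ (monC K f)) (monC K f)).trans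
                      (by rw [Real.norm_eq_abs])
    have h2 : ∑ f : Fin n → Fin d, |φ (monC K f)| * ‖monC K f‖
        ≤ (d : ℝ) ^ n * (‖φ‖ * M ^ n * M ^ n) := by
      calc ∑ f : Fin n → Fin d, |φ (monC K f)| * ‖monC K f‖
          ≤ ∑ _f : Fin n → Fin d, ‖φ‖ * M ^ n * M ^ n := by
            refine Finset.sum_le_sum fun f _ => ?_
            have hb : |φ (monC K f)| ≤ ‖φ‖ * M ^ n := by
              calc |φ (monC K f)| = ‖φ (monC K f)‖ := rfl
                _ ≤ ‖φ‖ * ‖monC K f‖ := φ.le_opNorm _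
                _ ≤ ‖φ‖ * M ^ n := by
                    exact mul_le_mul_of_nonneg_left (hPnorm f) (norm_nonneg _)
            exact mul_le_mul hb (hPnorm f) (norm_nonneg _) (by positivity)
        _ = (d : ℝ) ^ n * (‖φ‖ * M ^ n * M ^ n) := by
            rw [Finset.sum_const, hcard n]; simp [nsmul_eq_mul]
    calc ‖F n‖ ≤ (κ ^ n / n.factorial) * ((d : ℝ) ^ n * (‖φ‖ * M ^ n * M ^ n)) :=
          h1.trans (mul_le_mul_of_nonneg_left h2 hc)
      _ = ‖φ‖ * (r ^ n / n.factorial) := by rw [hrpow]; ring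
  have hFsummable : Summable F :=
    Summable.of_norm_bounded (hrsum.mul_left ‖φ‖) hFnorm
  have hFsum : HasSum F 0 := by
    have h1 := hFsummable.hasSum
    have h2 : ∑' n, F n = 0 := by
      ext y
      have h3 : HasSum (fun n => F n y) ((∑' n, F n) y) :=
        (ContinuousMap.evalCLM ℝ y).hasSum h1
      have h4 := h3.unique (hFzero y)
      simpa using h4
    rwa [h2] at h1
  have hφF : HasSum (fun n => φ (F n)) 0 := by
    have h1 := φ.hasSum hFsum
    rwa [map_zero] at h1
  -- each φ (F n) is nonnegative
  have hφFval : ∀ n : ℕ,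
      φ (F n) = (κ ^ n / n.factorial) * ∑ f : Fin n → Fin d, (φ (monC K f)) ^ 2 := by
    intro n
    rw [hFdef n]
    simp only [map_smul, map_sum, smul_eq_mul]
    congr 1
    exact Finset.sum_congr rfl fun f _ => (sq (φ (monC K f))).symm
  have hφFnonneg : ∀ n : ℕ, 0 ≤ φ (F n) := by
    intro n
    rw [hφFval n]
    exact mul_nonneg (by positivity) (Finset.sum_nonneg fun f _ => sq_nonneg _)
  have hφFzero : ∀ n : ℕ, φ (F n) = 0 := by
    intro n
    have h1 : φ (F n) ≤ ∑' m, φ (F m) :=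
      Summable.le_tsum hφF.summable n (fun m _ => hφFnonneg m)
    rw [hφF.tsum_eq] at h1
    exact le_antisymm h1 (hφFnonneg n)
  -- hence φ vanishes on every monomial
  have hP0 : ∀ {n : ℕ} (f : Fin n → Fin d), φ (monC K f) = 0 := by
    intro n f
    have h1 := hφFzero n
    rw [hφFval n] at h1
    have h2 : (κ ^ n / (n.factorial : ℝ)) ≠ 0 := by positivity
    have h3 : ∑ f : Fin n → Fin d, (φ (monC K f)) ^ 2 = 0 := by
      rcases mul_eq_zero.mp h1 with h | h
      · exact absurd h h2
      · exact h
    have h4 := (Finset.sum_eq_zero_iff_of_nonneg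
      (fun f _ => sq_nonneg (φ (monC K f)))).mp h3 f (Finset.mem_univ f)
    exact sq_eq_zero_iff.mp h4
  -- Stone–Weierstrass: the algebra generated by the coordinates is dense
  have hmon : ∀ l : List C(K, ℝ), (∀ y ∈ l, y ∈ Set.range (coordC K)) →
      ∃ (n : ℕ) (f : Fin n → Fin d), l.prod = monC K f := by
    intro l
    induction l with
    | nil => exact fun _ => ⟨0, Fin.elim0, by simp [monC]⟩
    | cons a t ih =>
      intro hl
      obtain ⟨n, f, hf⟩ := ih (fun y hy => hl y (List.mem_cons_of_mem a hy))
      obtain ⟨i, rfl⟩ := hl a List.mem_cons_self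
      refine ⟨n + 1, Fin.cases i f, ?_⟩
      rw [List.prod_cons, hf]
      simp [monC, Fin.prod_univ_succ]
  set A : Subalgebra ℝ C(K, ℝ) := Algebra.adjoin ℝ (Set.range (coordC K)) with hAdef
  have hφA : ∀ g ∈ A, φ g = 0 := by
    intro g hg
    have hg' : g ∈ Submodule.span ℝ
        ((Submonoid.closure (Set.range (coordC K)) : Submonoid C(K, ℝ)) : Set C(K, ℝ)) := by
      rw [← Algebra.adjoin_eq_span]
      exact hg
    clear hg
    induction hg' using Submodule.span_induction with
    | mem m hm =>
      obtain ⟨l, hl, hprod⟩ := Submonoid.exists_list_of_mem_closure hm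
      obtain ⟨n, f, hnf⟩ := hmon l hl
      rw [← hprod, hnf]
      exact hP0 f
    | zero => exact map_zero φ
    | add u v hu hv hu' hv' => rw [map_add, hu', hv', add_zero]
    | smul c u hu hu' => rw [map_smul, hu', smul_zero]
  have hAsep : A.SeparatesPoints := by
    intro x y hxy
    have hnexy : (x : EuclideanSpace ℝ (Fin d)) ≠ (y : EuclideanSpace ℝ (Fin d)) :=
      Subtype.coe_injective.ne hxy
    obtain ⟨i, hi⟩ : ∃ i, (x : EuclideanSpace ℝ (Fin d)) i ≠ (y : EuclideanSpace ℝ (Fin d)) i := by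
      by_contra hc
      push_neg at hc
      exact hnexy (PiLp.ext hc)
    exact ⟨coordC K i, ⟨coordC K i, Algebra.subset_adjoin ⟨i, rfl⟩, rfl⟩, hi⟩
  have hdense := ContinuousMap.subalgebra_topologicalClosure_eq_top_of_separatesPoints A hAsep
  ext g
  have hgmem : g ∈ A.topologicalClosure := by
    rw [hdense]
    trivial
  have hclos : g ∈ closure (A : Set C(K, ℝ)) := hgmem
  have hsub : closure (A : Set C(K, ℝ)) ⊆ φ ⁻¹' {0} :=
    closure_minimal (fun a ha => hφA a ha) (isClosed_singleton.preimage φ.continuous)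
  simpa using hsub hclos
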